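/- Let |(x,y,z)| = max{ √(x² + y²), |x| + |z| } for (x,y,z) ∈ ℝ³. There do not exist absolute norms f and g on ℝ² such that |(x,y,z)| = f(g(x,z), y) for all (x,y,z) ∈ ℝ³. -/

import Mathlib

/-- `f` is a norm on `ℝ^N`. -/
def IsNormOn {N : ℕ} (f : (Fin N → ℝ) → ℝ) : Prop :=
  (∀ x, f x = 0 ↔ x = 0) ∧
  (∀ (a : ℝ) (x), f (a • x) = |a| * f x) ∧
  (∀ x y, f (x + y) ≤ f x + f y)

/-- `f` is absolute: it only depends on the absolute values of the coordinates. -/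
def IsAbsoluteNorm {N : ℕ} (f : (Fin N → ℝ) → ℝ) : Prop :=
  ∀ x, f x = f (fun i => |x i|)

/-- `f` is normalized: it takes the value `1` at each canonical basis vector. -/
def IsNormalizedNorm {N : ℕ} (f : (Fin N → ℝ) → ℝ) : Prop :=
  ∀ i, f (Pi.single i 1) = 1


/-- The norm `|(x,y,z)| = max { √(x² + y²), |x| + |z| }` on `ℝ³`. -/
noncomputable def trinorm (v : Fin 3 → ℝ) : ℝ :=
  max (Real.sqrt ((v 0) ^ 2 + (v 1) ^ 2)) (|v 0| + |v 2|)

lemma smul_pair (t a b : ℝ) : t • (![a, b] : Fin 2 → ℝ) = ![t * a, t * b] := by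
  funext i; fin_cases i <;> simp

lemma abs_pair (a b : ℝ) :
    (fun i => |(![a, b] : Fin 2 → ℝ) i|) = ![|a|, |b|] := by
  funext i; fin_cases i <;> simp

/-- There do not exist absolute norms `f` and `g` on `ℝ²` such that
`|(x,y,z)| = f(g(x,z), y)` for all `(x,y,z) ∈ ℝ³`, where `|·|` is the norm
`|(x,y,z)| = max { √(x² + y²), |x| + |z| }`. -/
theorem stmt8 :
    ¬ ∃ f g : (Fin 2 → ℝ) → ℝ,
      IsNormOn f ∧ IsAbsoluteNorm f ∧ IsNormOn g ∧ IsAbsoluteNorm g ∧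
      ∀ x y z : ℝ, trinorm ![x, y, z] = f ![g ![x, z], y] := by
  rintro ⟨f, g, ⟨hf0, hfh, -⟩, hfa, -, -, h⟩
  -- f ![t, 0] = |t| * f ![1, 0]
  have hline : ∀ t : ℝ, f ![t, 0] = |t| * f ![1, 0] := by
    intro t
    have := hfh t ![1, 0]
    rwa [smul_pair, mul_one, mul_zero] at this
  -- f ![1,0] ≠ 0
  have hfne : f ![1, 0] ≠ 0 := by
    intro hzero
    have : (![1, 0] : Fin 2 → ℝ) = 0 := (hf0 _).mp hzero
    have := congrFun this 0
    simp at this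
  -- trinorm evaluations
  have ht1 : trinorm ![(1:ℝ), 0, 0] = 1 := by
    simp [trinorm, Real.sqrt_one]
  have ht2 : trinorm ![(0:ℝ), 0, 1] = 1 := by
    norm_num [trinorm, Real.sqrt_eq_zero', Matrix.cons_val_two]
  have ht3 : trinorm ![(1:ℝ), 1, 0] = Real.sqrt 2 := by
    have h1 : (1:ℝ) ≤ Real.sqrt 2 := by
      rw [show (1:ℝ) = Real.sqrt 1 by simp]
      exact Real.sqrt_le_sqrt (by norm_num)
    simp only [trinorm]
    norm_num [Matrix.cons_val_two]

  have ht4 : trinorm ![(0:ℝ), 1, 1] = 1 := by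
    have : Real.sqrt ((0:ℝ)^2 + 1^2) = 1 := by norm_num
    simp [trinorm, this]
  -- |g ![1,0]| = |g ![0,1]|
  have e1 : |g ![1, 0]| * f ![1, 0] = 1 := by
    have := h 1 0 0; rw [ht1, hline] at this; linarith
  have e2 : |g ![0, 1]| * f ![1, 0] = 1 := by
    have := h 0 0 1; rw [ht2, hline] at this; linarith
  have heq : |g ![1, 0]| = |g ![0, 1]| :=
    mul_right_cancel₀ hfne (e1.trans e2.symm)
  -- final contradiction
  have k1 : Real.sqrt 2 = f ![|g ![1, 0]|, 1] := by
    have := h 1 1 0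
    rw [ht3, hfa ![g ![1, 0], 1], abs_pair, abs_one] at this
    exact this
  have k2 : (1:ℝ) = f ![|g ![0, 1]|, 1] := by
    have := h 0 1 1
    rw [ht4, hfa ![g ![0, 1], 1], abs_pair, abs_one] at this
    exact this
  rw [heq, ← k2] at k1
  have : Real.sqrt 2 > 1 := by
    rw [show (1:ℝ) = Real.sqrt 1 by simp]
    exact Real.sqrt_lt_sqrt (by norm_num) (by norm_num)
  linarith
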